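/- arXiv:2108.09857 — 3 statements merged into one kernel-verified Lean document; each statement's English description precedes it below -/
import Mathlib

section
/- Let K be a field of characteristic 0, let γ₁, …, γ_k ∈ K^× satisfy [K(√γ₁, …, √γ_k) : K] = 2^k, and let γ ∈ K^× be an element that is not a square in K. Then there exists an index j ∈ {1, …, k} such that, writing the k elements obtained from γ₁, …, γ_k by replacing γ_j with γ, one has [K(√γ, √γ_i (i ≠ j)) : K] = 2^k. -/
set_option synthInstance.maxHeartbeats 100000
set_option maxHeartbeats 1000000
set_option linter.unusedSectionVars false

open IntermediateField Module Polynomial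

section Aux
variable {K Ω : Type*} [Field K] [Field Ω] [Algebra K Ω] [CharZero Ω]

theorem mem_iff_range {F : IntermediateField K Ω} {x : Ω} :
    x ∈ Set.range (algebraMap F Ω) ↔ x ∈ F := by
  constructor
  · rintro ⟨y, rfl⟩; exact y.2
  · intro h; exact ⟨⟨x, h⟩, rfl⟩

theorem isIntegral_of_sq_mem (F : IntermediateField K Ω) {x : Ω} (hx2 : x ^ 2 ∈ F) :
    IsIntegral F x := by
  refine ⟨X ^ 2 - C ⟨x ^ 2, hx2⟩, monic_X_pow_sub_C _ two_ne_zero, ?_⟩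
  simp [IntermediateField.algebraMap_apply]

theorem minpoly_dvd_of_sq_mem (F : IntermediateField K Ω) {x : Ω} (hx2 : x ^ 2 ∈ F) :
    minpoly F x ∣ X ^ 2 - C (⟨x ^ 2, hx2⟩ : F) := by
  apply minpoly.dvd
  simp [IntermediateField.algebraMap_apply]

theorem finrank_adjoin_sq_le (F : IntermediateField K Ω) {x : Ω} (hx2 : x ^ 2 ∈ F) :
    finrank F F⟮x⟯ ≤ 2 := by
  rw [IntermediateField.adjoin.finrank (isIntegral_of_sq_mem F hx2)]
  have h := Polynomial.natDegree_le_of_dvd (minpoly_dvd_of_sq_mem F hx2)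
    (by apply Polynomial.Monic.ne_zero; exact monic_X_pow_sub_C _ two_ne_zero)
  simpa using h.trans_eq (by simp [Polynomial.natDegree_X_pow_sub_C])

theorem finrank_adjoin_sq_eq (F : IntermediateField K Ω) {x : Ω} (hx2 : x ^ 2 ∈ F)
    (hx : x ∉ F) : finrank F F⟮x⟯ = 2 := by
  refine le_antisymm (finrank_adjoin_sq_le F hx2) ?_
  rw [IntermediateField.adjoin.finrank (isIntegral_of_sq_mem F hx2)]
  exact (minpoly.two_le_natDegree_iff (isIntegral_of_sq_mem F hx2)).mpr
    (fun h => hx (mem_iff_range.mp h))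

theorem mem_or_mul_mem (F : IntermediateField K Ω) {a y : Ω} (ha2 : a ^ 2 ∈ F) (ha : a ∉ F)
    (hy : y ∈ F⟮a⟯) (hy2 : y ^ 2 ∈ F) : y ∈ F ∨ y * a ∈ F := by
  have hint := isIntegral_of_sq_mem F ha2
  have h1 : y ∈ Algebra.adjoin F ({a} : Set Ω) := by
    rw [← IntermediateField.adjoin_simple_toSubalgebra_of_isAlgebraic hint.isAlgebraic]
    exact hy
  rw [Algebra.adjoin_singleton_eq_range_aeval] at h1
  obtain ⟨p, hp⟩ := h1
  set c : F := ⟨a ^ 2, ha2⟩ with hc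
  have hmo : (X ^ 2 - C c).Monic := monic_X_pow_sub_C _ two_ne_zero
  have haroot : aeval a (X ^ 2 - C c) = 0 := by
    simp [hc, IntermediateField.algebraMap_apply]
  set q := p %ₘ (X ^ 2 - C c) with hq
  have hyq : aeval a q = y := by
    have := Polynomial.modByMonic_add_div p (X ^ 2 - C c)
    calc aeval a q = aeval a (q + (X ^ 2 - C c) * (p /ₘ (X ^ 2 - C c))) := by
          simp [haroot]
      _ = aeval a p := by rw [this]
      _ = y := hp
  have hdeg : q.degree ≤ 1 := by
    have := Polynomial.degree_modByMonic_lt p hmo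
    have h2 : (X ^ 2 - C c).degree = 2 := by
      exact_mod_cast Polynomial.degree_X_pow_sub_C (by norm_num : 0 < 2) c
    rw [h2] at this
    exact Order.le_of_lt_succ (by exact_mod_cast this)
  have hqeq : q = C (q.coeff 1) * X + C (q.coeff 0) :=
    Polynomial.eq_X_add_C_of_degree_le_one hdeg
  set P0 : Ω := algebraMap F Ω (q.coeff 0) with hP0
  set P1 : Ω := algebraMap F Ω (q.coeff 1) with hP1
  have hP0m : P0 ∈ F := (q.coeff 0).2
  have hP1m : P1 ∈ F := (q.coeff 1).2
  have hyrep : y = P1 * a + P0 := by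
    rw [← hyq]; conv_lhs => rw [hqeq]
    simp [hP0, hP1]
  by_cases h0 : P0 = 0
  · right
    have : y * a = P1 * a ^ 2 := by rw [hyrep, h0]; ring
    rw [this]
    exact F.mul_mem hP1m ha2
  by_cases h1' : P1 = 0
  · left
    rw [hyrep, h1', zero_mul, zero_add]
    exact hP0m
  exfalso
  have hmem : (2 * P1 * P0) * a ∈ F := by
    have : (2 * P1 * P0) * a = y ^ 2 - P1 ^ 2 * a ^ 2 - P0 ^ 2 := by rw [hyrep]; ring
    rw [this]
    have e1 : P1 ^ 2 ∈ F := by rw [sq]; exact F.mul_mem hP1m hP1m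
    have e0 : P0 ^ 2 ∈ F := by rw [sq]; exact F.mul_mem hP0m hP0m
    exact F.sub_mem (F.sub_mem hy2 (F.mul_mem e1 ha2)) e0
  have hne : (2 * P1 * P0) ≠ 0 := by
    simp only [mul_ne_zero_iff]
    exact ⟨⟨two_ne_zero, h1'⟩, h0⟩
  apply ha
  have : a = (2 * P1 * P0)⁻¹ * ((2 * P1 * P0) * a) := by
    field_simp
  rw [this]
  exact F.mul_mem (F.inv_mem (F.mul_mem (F.mul_mem
    (by simpa using F.intCast_mem 2) hP1m) hP0m)) hmem

end Aux

/-- **Lemma (Kummer theory swap).** Let `K` be a field of characteristic 0, let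
`γ₁, …, γ_k ∈ K^×` satisfy `[K(√γ₁, …, √γ_k) : K] = 2^k`, and let `γ ∈ K^×` be not a square
in `K`. Then there is an index `j` such that `[K(√γ, √γ_i (i ≠ j)) : K] = 2^k`.
Square roots are taken in a fixed algebraic closure of `K`. -/
theorem kummer_swap {K : Type*} [Field K] [CharZero K] {k : ℕ} (hk : 0 < k)
    (γs : Fin k → K) (hγs0 : ∀ i, γs i ≠ 0)
    (hdeg : ∃ s : Fin k → AlgebraicClosure K,
      (∀ i, s i ^ 2 = algebraMap K (AlgebraicClosure K) (γs i)) ∧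
      Module.finrank K (IntermediateField.adjoin K (Set.range s)) = 2 ^ k)
    (γ : K) (hγ0 : γ ≠ 0) (hγ : ¬ ∃ y : K, y ^ 2 = γ) :
    ∃ j : Fin k, ∃ t : Fin k → AlgebraicClosure K,
      t j ^ 2 = algebraMap K (AlgebraicClosure K) γ ∧
      (∀ i, i ≠ j → t i ^ 2 = algebraMap K (AlgebraicClosure K) (γs i)) ∧
      Module.finrank K (IntermediateField.adjoin K (Set.range t)) = 2 ^ k := by
  classical
  obtain ⟨s, hs, hL⟩ := hdeg
  obtain ⟨x, hx⟩ : ∃ x : AlgebraicClosure K, x ^ 2 = algebraMap K (AlgebraicClosure K) γ :=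
    IsAlgClosed.exists_pow_nat_eq _ (by norm_num)
  have hx0 : x ≠ 0 := by
    intro h
    apply hγ0
    have h2 : algebraMap K (AlgebraicClosure K) γ = 0 := by rw [← hx, h]; ring
    exact (_root_.map_eq_zero (algebraMap K (AlgebraicClosure K))).mp h2
  have hxbot : ∀ (F : IntermediateField K (AlgebraicClosure K)), F = ⊥ → x ∉ F := by
    rintro F rfl hxF
    rw [IntermediateField.mem_bot] at hxF
    obtain ⟨z, hz⟩ := hxF
    apply hγ
    refine ⟨z, ?_⟩
    have h2 : algebraMap K (AlgebraicClosure K) (z ^ 2) = algebraMap K (AlgebraicClosure K) γ := by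
      rw [map_pow, hz, hx]
    exact (algebraMap K (AlgebraicClosure K)).injective h2
  have hfd : ∀ m, FiniteDimensional K ((IntermediateField.adjoin K (s '' {i | (i : ℕ) < m}))) := by
    intro m
    haveI : Finite ↥(s '' {i : Fin k | (i : ℕ) < m}) :=
      Set.Finite.to_subtype ((Set.toFinite _).image s)
    exact IntermediateField.finiteDimensional_adjoin
      (fun z _ => (Algebra.IsAlgebraic.isAlgebraic z).isIntegral)
  have hG0 : (IntermediateField.adjoin K (s '' {i | (i : ℕ) < 0})) = ⊥ := by
    have h0 : {i : Fin k | (i : ℕ) < 0} = ∅ := by ext i; simp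
    simp [h0]
  have hGk : (IntermediateField.adjoin K (s '' {i | (i : ℕ) < k})) = IntermediateField.adjoin K (Set.range s) := by
    have h0 : {i : Fin k | (i : ℕ) < k} = Set.univ := by ext i; simp [i.isLt]
    simp [h0]
  have hmono : ∀ {m n : ℕ}, m ≤ n → (IntermediateField.adjoin K (s '' {i | (i : ℕ) < m})) ≤ (IntermediateField.adjoin K (s '' {i | (i : ℕ) < n})) := by
    intro m n hmn
    apply IntermediateField.adjoin.mono
    apply Set.image_mono
    intro i hi
    exact lt_of_lt_of_le hi hmn
  have himg : ∀ m (hm : m < k),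
      s '' {i : Fin k | (i : ℕ) < m + 1} = s '' {i : Fin k | (i : ℕ) < m} ∪ {s ⟨m, hm⟩} := by
    intro m hm
    have hidx : {i : Fin k | (i : ℕ) < m + 1} =
        {i : Fin k | (i : ℕ) < m} ∪ {(⟨m, hm⟩ : Fin k)} := by
      ext i
      simp only [Set.mem_setOf_eq, Set.mem_union, Set.mem_singleton_iff,
        Nat.lt_succ_iff_lt_or_eq]
      constructor
      · rintro (h | h)
        · exact Or.inl h
        · exact Or.inr (Fin.ext h)
      · rintro (h | rfl)
        · exact Or.inl h
        · simp
    rw [hidx, Set.image_union, Set.image_singleton]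
  have hstep : ∀ m (hm : m < k),
      (IntermediateField.adjoin K (s '' {i | (i : ℕ) < m + 1})) = (((IntermediateField.adjoin K (s '' {i | (i : ℕ) < m})))⟮s ⟨m, hm⟩⟯).restrictScalars K := by
    intro m hm
    rw [himg m hm, IntermediateField.adjoin_adjoin_left]
  have hstepdim : ∀ m (hm : m < k),
      finrank K ((IntermediateField.adjoin K (s '' {i | (i : ℕ) < m + 1}))) = finrank K ((IntermediateField.adjoin K (s '' {i | (i : ℕ) < m}))) * finrank ((IntermediateField.adjoin K (s '' {i | (i : ℕ) < m}))) (((IntermediateField.adjoin K (s '' {i | (i : ℕ) < m})))⟮s ⟨m, hm⟩⟯) := by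
    intro m hm
    haveI := hfd m
    rw [hstep m hm]
    exact (Module.finrank_mul_finrank K ((IntermediateField.adjoin K (s '' {i | (i : ℕ) < m}))) (((IntermediateField.adjoin K (s '' {i | (i : ℕ) < m})))⟮s ⟨m, hm⟩⟯)).symm
  have hsq : ∀ (i : Fin k) m, (s i) ^ 2 ∈ (IntermediateField.adjoin K (s '' {i | (i : ℕ) < m})) := by
    intro i m
    rw [hs i]
    exact ((IntermediateField.adjoin K (s '' {i | (i : ℕ) < m}))).algebraMap_mem _
  have hle : ∀ m, m ≤ k → finrank K ((IntermediateField.adjoin K (s '' {i | (i : ℕ) < m}))) ≤ 2 ^ m := by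
    intro m
    induction m with
    | zero => intro _; rw [hG0]; simp [IntermediateField.finrank_bot]
    | succ n ih =>
      intro hn
      have hnk : n < k := hn
      rw [hstepdim n hnk, pow_succ]
      exact Nat.mul_le_mul (ih (le_of_lt hnk)) (finrank_adjoin_sq_le _ (hsq _ _))
  by_cases hxL : x ∈ (IntermediateField.adjoin K (s '' {i | (i : ℕ) < k}))
  · -- x lies in the full field; find the minimal level containing it
    have hex : ∃ m, x ∈ (IntermediateField.adjoin K (s '' {i | (i : ℕ) < m})) := ⟨k, hxL⟩
    set m := Nat.find hex with hmdef
    have hxm : x ∈ (IntermediateField.adjoin K (s '' {i | (i : ℕ) < m})) := Nat.find_spec hex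
    have hmin : ∀ l, l < m → x ∉ (IntermediateField.adjoin K (s '' {i | (i : ℕ) < l})) := fun l hl => Nat.find_min hex hl
    have hmk : m ≤ k := Nat.find_min' hex hxL
    have hm0 : m ≠ 0 := by
      intro h
      exact hxbot ((IntermediateField.adjoin K (s '' {i | (i : ℕ) < 0}))) hG0 (h ▸ hxm)
    have hm1k : m - 1 < k := by omega
    obtain ⟨j, hjval⟩ : ∃ j : Fin k, (j : ℕ) = m - 1 := ⟨⟨m - 1, hm1k⟩, rfl⟩
    have hj2 : j = ⟨m - 1, hm1k⟩ := Fin.ext hjval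
    have hmm : m - 1 + 1 = m := by omega
    have hsjnot : s j ∉ (IntermediateField.adjoin K (s '' {i | (i : ℕ) < m - 1})) := by
      intro hsj
      apply hmin (m - 1) (by omega)
      have hGle : (IntermediateField.adjoin K (s '' {i | (i : ℕ) < m})) ≤ (IntermediateField.adjoin K (s '' {i | (i : ℕ) < m - 1})) := by
        rw [IntermediateField.adjoin_le_iff]
        rintro z ⟨i, hi, rfl⟩
        simp only [Set.mem_setOf_eq] at hi
        rcases Nat.lt_or_ge (i : ℕ) (m - 1) with h | h
        · exact IntermediateField.subset_adjoin K _ ⟨i, h, rfl⟩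
        · have hij : i = j := by apply Fin.ext; omega
          rw [hij]; exact hsj
      exact hGle hxm
    have hxmem : x ∈ ((IntermediateField.adjoin K (s '' {i | (i : ℕ) < m - 1})))⟮s j⟯ := by
      have h1 := hstep (m - 1) hm1k
      rw [hmm, ← hj2] at h1
      rw [h1] at hxm
      exact hxm
    have hxnot : x ∉ (IntermediateField.adjoin K (s '' {i | (i : ℕ) < m - 1})) := hmin (m - 1) (by omega)
    have hx2mem : x ^ 2 ∈ (IntermediateField.adjoin K (s '' {i | (i : ℕ) < m - 1})) := by
      rw [hx]; exact ((IntermediateField.adjoin K (s '' {i | (i : ℕ) < m - 1}))).algebraMap_mem _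
    have hor := mem_or_mul_mem ((IntermediateField.adjoin K (s '' {i | (i : ℕ) < m - 1}))) (hsq j (m - 1)) hsjnot hxmem hx2mem
    have hw : x * s j ∈ (IntermediateField.adjoin K (s '' {i | (i : ℕ) < m - 1})) := hor.resolve_left hxnot
    refine ⟨j, Function.update s j x, ?_, ?_, ?_⟩
    · rw [Function.update_self]; exact hx
    · intro i hij; rw [Function.update_of_ne hij]; exact hs i
    · have hEq : IntermediateField.adjoin K (Set.range (Function.update s j x)) =
          IntermediateField.adjoin K (Set.range s) := by
        apply le_antisymm
        · rw [IntermediateField.adjoin_le_iff]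
          rintro z ⟨i, rfl⟩
          by_cases hij : i = j
          · rw [hij, Function.update_self]
            rw [← hGk]
            exact hmono hmk hxm
          · rw [Function.update_of_ne hij]
            exact IntermediateField.subset_adjoin K _ ⟨i, rfl⟩
        · rw [IntermediateField.adjoin_le_iff]
          rintro z ⟨i, rfl⟩
          by_cases hij : i = j
          · have hGm1le : (IntermediateField.adjoin K (s '' {i | (i : ℕ) < m - 1})) ≤
                IntermediateField.adjoin K (Set.range (Function.update s j x)) := by
              rw [IntermediateField.adjoin_le_iff]
              rintro z ⟨i', hi', rfl⟩
              simp only [Set.mem_setOf_eq] at hi'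
              have hij' : i' ≠ j := by
                intro h
                rw [h] at hi'
                omega
              rw [← Function.update_of_ne hij' x s]
              exact IntermediateField.subset_adjoin K _ ⟨i', rfl⟩
            have hxadj : x ∈ IntermediateField.adjoin K (Set.range (Function.update s j x)) := by
              refine IntermediateField.subset_adjoin K _ ⟨j, ?_⟩
              rw [Function.update_self]
            have hrw : s i = x⁻¹ * (x * s j) := by
              rw [hij, ← mul_assoc, inv_mul_cancel₀ hx0, one_mul]
            rw [hrw]
            exact mul_mem (inv_mem hxadj) (hGm1le hw)
          · rw [← Function.update_of_ne hij x s]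
            exact IntermediateField.subset_adjoin K _ ⟨i, rfl⟩
      rw [hEq]
      exact hL
  · -- x is not in the full field; replace the last generator
    have hk1 : k - 1 < k := by omega
    obtain ⟨j, hjval⟩ : ∃ j : Fin k, (j : ℕ) = k - 1 := ⟨⟨k - 1, hk1⟩, rfl⟩
    have hj2 : j = ⟨k - 1, hk1⟩ := Fin.ext hjval
    have hkk : k - 1 + 1 = k := by omega
    have hdq : finrank K ((IntermediateField.adjoin K (s '' {i | (i : ℕ) < k}))) =
        finrank K ((IntermediateField.adjoin K (s '' {i | (i : ℕ) < k - 1}))) * finrank ((IntermediateField.adjoin K (s '' {i | (i : ℕ) < k - 1}))) (((IntermediateField.adjoin K (s '' {i | (i : ℕ) < k - 1})))⟮s j⟯) := by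
      have h1 := hstepdim (k - 1) hk1
      rw [hkk, ← hj2] at h1
      exact h1
    have hGk1 : finrank K ((IntermediateField.adjoin K (s '' {i | (i : ℕ) < k - 1}))) = 2 ^ (k - 1) := by
      have h1 : finrank K ((IntermediateField.adjoin K (s '' {i | (i : ℕ) < k - 1}))) ≤ 2 ^ (k - 1) := hle _ (by omega)
      have h2 : finrank ((IntermediateField.adjoin K (s '' {i | (i : ℕ) < k - 1}))) (((IntermediateField.adjoin K (s '' {i | (i : ℕ) < k - 1})))⟮s j⟯) ≤ 2 :=
        finrank_adjoin_sq_le _ (hsq j (k - 1))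
      have h3 : finrank K ((IntermediateField.adjoin K (s '' {i | (i : ℕ) < k}))) = 2 ^ k := by rw [hGk]; exact hL
      have h4 : (2 : ℕ) ^ k ≤ finrank K ((IntermediateField.adjoin K (s '' {i | (i : ℕ) < k - 1}))) * 2 := by
        rw [← h3, hdq]
        exact Nat.mul_le_mul_left _ h2
      have h5 : (2 : ℕ) ^ k = 2 ^ (k - 1) * 2 := by
        rw [← pow_succ, hkk]
      omega
    have hxnot : x ∉ (IntermediateField.adjoin K (s '' {i | (i : ℕ) < k - 1})) := fun h => hxL (hmono (by omega) h)
    have hx2mem : x ^ 2 ∈ (IntermediateField.adjoin K (s '' {i | (i : ℕ) < k - 1})) := by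
      rw [hx]; exact ((IntermediateField.adjoin K (s '' {i | (i : ℕ) < k - 1}))).algebraMap_mem _
    refine ⟨j, Function.update s j x, ?_, ?_, ?_⟩
    · rw [Function.update_self]; exact hx
    · intro i hij; rw [Function.update_of_ne hij]; exact hs i
    · have hrange : Set.range (Function.update s j x) =
          s '' {i : Fin k | (i : ℕ) < k - 1} ∪ {x} := by
        ext z
        constructor
        · rintro ⟨i, rfl⟩
          by_cases hij : i = j
          · rw [hij, Function.update_self]
            exact Or.inr rfl
          · rw [Function.update_of_ne hij]
            refine Or.inl ⟨i, ?_, rfl⟩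
            have h2 : (i : ℕ) ≠ k - 1 := fun h => hij (Fin.ext (h.trans hjval.symm))
            have h3 := i.isLt
            simp only [Set.mem_setOf_eq]
            omega
        · rintro (⟨i, hi, rfl⟩ | hz)
          · simp only [Set.mem_setOf_eq] at hi
            have hij : i ≠ j := by
              intro h
              rw [h] at hi
              omega
            exact ⟨i, Function.update_of_ne hij x s⟩
          · rw [Set.mem_singleton_iff] at hz
            exact ⟨j, (Function.update_self j x s).trans hz.symm⟩
      have hadj := IntermediateField.adjoin_adjoin_left K
        (s '' {i : Fin k | (i : ℕ) < k - 1}) {x}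
      rw [hrange, ← hadj]
      haveI := hfd (k - 1)
      have hmul : finrank K ((((IntermediateField.adjoin K (s '' {i | (i : ℕ) < k - 1})))⟮x⟯).restrictScalars K) =
          finrank K ((IntermediateField.adjoin K (s '' {i | (i : ℕ) < k - 1}))) * finrank ((IntermediateField.adjoin K (s '' {i | (i : ℕ) < k - 1}))) (((IntermediateField.adjoin K (s '' {i | (i : ℕ) < k - 1})))⟮x⟯) :=
        (Module.finrank_mul_finrank K ((IntermediateField.adjoin K (s '' {i | (i : ℕ) < k - 1}))) (((IntermediateField.adjoin K (s '' {i | (i : ℕ) < k - 1})))⟮x⟯)).symm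
      rw [hmul, hGk1, finrank_adjoin_sq_eq _ hx2mem hxnot, ← pow_succ, hkk]
end

section
/- Let γ be an algebraic number and n a positive integer. Then |h(Φ_n(γ)) − φ(n)·h(γ)| ≤ 2^{ω(n)}·log(π·n), where Φ_n is the n-th cyclotomic polynomial, φ is Euler's totient function and ω(n) is the number of distinct prime divisors of n. -/
open NumberField IsDedekindDomain Module Polynomial
open scoped Classical

/-- The `𝔭`-adic valuation `ν_𝔭` on a number field `K`, as an integer
(with the convention `ν_𝔭(0) = 0`). -/
noncomputable def nuP {K : Type*} [Field K] [NumberField K]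
    (v : HeightOneSpectrum (𝓞 K)) (x : K) : ℤ :=
  if hx : x = 0 then 0
  else -Multiplicative.toAdd (WithZero.unzero ((v.valuation K).ne_zero_iff.mpr hx))

/-- The absolute logarithmic Weil height of an element of a number field `K`. -/
noncomputable def logHeight {K : Type*} [Field K] [NumberField K] (x : K) : ℝ :=
  (Module.finrank ℚ K : ℝ)⁻¹ *
    ((∑ σ : K →+* ℂ, Real.log (max 1 (‖σ x‖))) +
     ∑ᶠ v : HeightOneSpectrum (𝓞 K),
       ((max 0 (-(nuP v x)) : ℤ) : ℝ) * Real.log (Ideal.absNorm v.asIdeal))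

section MoebiusLemmas
open Finset ArithmeticFunction
open scoped ArithmeticFunction.Moebius



lemma sum_moebius_mul_id (n : ℕ) (hn : 0 < n) :
    ∑ x ∈ n.divisorsAntidiagonal, (μ x.1 : ℤ) * (x.2 : ℤ) = (Nat.totient n : ℤ) := by
  have h := (ArithmeticFunction.sum_eq_iff_sum_smul_moebius_eq
      (R := ℤ) (f := fun d => (Nat.totient d : ℤ)) (g := fun d => (d : ℤ))).mp ?_ n hn
  · simpa [zsmul_eq_mul] using h
  · intro m hm
    exact_mod_cast congrArg (Nat.cast (R := ℤ)) (Nat.sum_totient m)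

lemma card_squarefree_divisors (n : ℕ) (hn : n ≠ 0) :
    ∑ d ∈ n.divisors, |(μ d : ℤ)| = 2 ^ n.primeFactors.card := by
  have h1 : ∀ d : ℕ, |(μ d : ℤ)| = if Squarefree d then 1 else 0 := by
    intro d
    by_cases h : Squarefree d
    · rw [moebius_apply_of_squarefree h, if_pos h, abs_pow, abs_neg, abs_one, one_pow]
    · rw [moebius_eq_zero_of_not_squarefree h, if_neg h, abs_zero]
  simp_rw [h1]
  rw [← Finset.sum_filter]
  have h2 := Nat.sum_divisors_filter_squarefree hn (α := ℤ) (f := fun _ => (1 : ℤ))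
  rw [h2, Finset.sum_const, Finset.card_powerset, Nat.factors_eq]
  simp [Nat.toFinset_factors]



lemma eval_prod_cyclotomic {m : ℕ} (hm : 0 < m) (z : ℂ) :
    ∏ i ∈ m.divisors, (cyclotomic i ℂ).eval z = z ^ m - 1 := by
  have := congrArg (eval z) (prod_cyclotomic_eq_X_pow_sub_one hm ℂ)
  simpa [eval_prod] using this

lemma cyclotomic_eval_ne_zero' {i : ℕ} (hi : 0 < i) {z : ℂ} (hz : 1 < ‖z‖) :
    (cyclotomic i ℂ).eval z ≠ 0 := by
  intro h
  have h2 : z ^ i - 1 = 0 := by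
    rw [← eval_prod_cyclotomic hi z]
    exact Finset.prod_eq_zero (Nat.mem_divisors_self i hi.ne') h
  have h3 : z ^ i = 1 := by rwa [sub_eq_zero] at h2
  have h4 : ‖z‖ ^ i = 1 := by
    rw [← norm_pow, h3, norm_one]
  have h5 : (1:ℝ) < ‖z‖ ^ i := one_lt_pow₀ hz hi.ne'
  rw [h4] at h5; exact lt_irrefl _ h5

lemma pow_sub_one_ne_zero {m : ℕ} (hm : 0 < m) {z : ℂ} (hz : 1 < ‖z‖) :
    z ^ m - 1 ≠ 0 := by
  intro h
  have h3 : z ^ m = 1 := by rwa [sub_eq_zero] at h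
  have h4 : ‖z‖ ^ m = 1 := by rw [← norm_pow, h3, norm_one]
  have h5 : (1:ℝ) < ‖z‖ ^ m := one_lt_pow₀ hz hm.ne'
  rw [h4] at h5; exact lt_irrefl _ h5

lemma cyclotomic_eval_eq_prod {n : ℕ} (hn : 0 < n) {z : ℂ} (hz : 1 < ‖z‖) :
    (cyclotomic n ℂ).eval z
      = ∏ x ∈ n.divisorsAntidiagonal, (z ^ x.2 - 1) ^ (μ x.1) := by
  refine ((ArithmeticFunction.prod_eq_iff_prod_pow_moebius_eq_of_nonzero
    (R := ℂ) (f := fun i => (cyclotomic i ℂ).eval z) (g := fun m => z ^ m - 1)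
    (fun i hi => cyclotomic_eval_ne_zero' hi hz)
    (fun m hm => pow_sub_one_ne_zero hm hz)).mp
    (fun m hm => eval_prod_cyclotomic hm z) n hn).symm


lemma log_abs_pow_sub_one {a : ℕ} (ha : 0 < a) {z : ℂ} (hz : 1 < ‖z‖) :
    Real.log (‖z ^ a - 1‖)
      = (a : ℝ) * Real.log (‖z‖) + Real.log (‖1 - z⁻¹ ^ a‖) := by
  have hz0 : z ≠ 0 := by
    intro h; rw [h, norm_zero] at hz; linarith
  have hsplit : z ^ a - 1 = z ^ a * (1 - z⁻¹ ^ a) := by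
    rw [inv_pow, mul_sub, mul_one, mul_inv_cancel₀ (pow_ne_zero a hz0)]
  have habs : ‖z ^ a - 1‖
      = ‖z‖ ^ a * ‖1 - z⁻¹ ^ a‖ := by
    rw [hsplit, norm_mul, norm_pow]
  have hne2 : ‖1 - z⁻¹ ^ a‖ ≠ 0 := by
    intro h
    have := pow_sub_one_ne_zero ha hz
    rw [hsplit] at this
    simp only [norm_eq_zero] at h
    exact this (by rw [h, mul_zero])
  rw [habs, Real.log_mul (by positivity) hne2, Real.log_pow]

lemma log_cyclotomic_eval {n : ℕ} (hn : 0 < n) {z : ℂ} (hz : 1 < ‖z‖) :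
    Real.log (‖(cyclotomic n ℂ).eval z‖)
      = (Nat.totient n : ℝ) * Real.log (‖z‖)
        + ∑ x ∈ n.divisorsAntidiagonal, (μ x.1 : ℝ) * Real.log (‖1 - z⁻¹ ^ x.2‖) := by
  have h1 : Real.log (‖(cyclotomic n ℂ).eval z‖)
      = ∑ x ∈ n.divisorsAntidiagonal, (μ x.1 : ℝ) * Real.log (‖z ^ x.2 - 1‖) := by
    rw [cyclotomic_eval_eq_prod hn hz, norm_prod, Real.log_prod]
    · refine Finset.sum_congr rfl fun x hx => ?_
      rw [norm_zpow, Real.log_zpow]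
    · intro x hx
      have hx2 : 0 < x.2 := Nat.pos_of_mem_divisors (Nat.snd_mem_divisors_of_mem_antidiagonal hx)
      exact fun h => (zpow_ne_zero (μ x.1) (pow_sub_one_ne_zero hx2 hz))
        (by rwa [norm_eq_zero] at h)
  rw [h1]
  have h2 : ∀ x ∈ n.divisorsAntidiagonal,
      (μ x.1 : ℝ) * Real.log (‖z ^ x.2 - 1‖)
        = ((μ x.1 : ℝ) * (x.2 : ℝ)) * Real.log (‖z‖)
          + (μ x.1 : ℝ) * Real.log (‖1 - z⁻¹ ^ x.2‖) := by
    intro x hx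
    have hx2 : 0 < x.2 := Nat.pos_of_mem_divisors (Nat.snd_mem_divisors_of_mem_antidiagonal hx)
    rw [log_abs_pow_sub_one hx2 hz]
    ring
  rw [Finset.sum_congr rfl h2, Finset.sum_add_distrib, ← Finset.sum_mul]
  have h3 : ∑ x ∈ n.divisorsAntidiagonal, (μ x.1 : ℝ) * (x.2 : ℝ) = (Nat.totient n : ℝ) := by
    have := sum_moebius_mul_id n hn
    calc ∑ x ∈ n.divisorsAntidiagonal, (μ x.1 : ℝ) * (x.2 : ℝ)
        = ((∑ x ∈ n.divisorsAntidiagonal, (μ x.1 : ℤ) * (x.2 : ℤ) : ℤ) : ℝ) := by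
          push_cast; rfl
      _ = (Nat.totient n : ℝ) := by rw [this]; push_cast; rfl
  rw [h3]


lemma exp_neg_le_one_sub_half {x : ℝ} (h0 : 0 ≤ x) (h1 : x ≤ 1) :
    Real.exp (-x) ≤ 1 - x / 2 := by
  have h2 : (1 : ℝ) + x ≤ Real.exp x := by
    have := Real.add_one_le_exp x; linarith
  have h3 : Real.exp (-x) = (Real.exp x)⁻¹ := Real.exp_neg x
  have h4 : (Real.exp x)⁻¹ ≤ (1 + x)⁻¹ := by
    apply inv_anti₀ (by linarith) h2
  have h5 : (1 + x)⁻¹ ≤ 1 - x / 2 := by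
    rw [inv_le_iff_one_le_mul₀ (by linarith)]
    nlinarith
  linarith

lemma neg_log_one_sub_le {t c φr : ℝ} (hc : 0 < c) (hφ : 0 < φr) (ht0 : 0 ≤ t)
    (hte : t ≤ Real.exp (-(c / φr))) :
    -Real.log (1 - t) ≤ max (Real.log 2) (Real.log (2 * φr / c)) := by
  have ht1 : t < 1 := lt_of_le_of_lt hte (Real.exp_lt_one_iff.mpr (neg_lt_zero.mpr (by positivity)))
  rcases le_or_gt t (1/2) with h | h
  · refine le_max_of_le_left ?_
    rw [← Real.log_inv]
    apply Real.log_le_log (inv_pos.mpr (by linarith))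
    rw [inv_le_comm₀ (by linarith) (by norm_num)]
    linarith
  · refine le_max_of_le_right ?_
    set x := c / φr with hx
    have hx0 : 0 < x := by positivity
    have hx1 : x ≤ 1 := by
      by_contra hcon
      push_neg at hcon
      have : Real.exp (-x) < Real.exp (-1) := by
        apply Real.exp_lt_exp.mpr; linarith
      have he : Real.exp (-1) < 1/2 := by
        rw [Real.exp_neg]
        rw [inv_lt_comm₀ (Real.exp_pos 1) (by norm_num)]
        have := Real.exp_one_gt_d9; linarith
      linarith
    have hkey : x / 2 ≤ 1 - t := by
      have := exp_neg_le_one_sub_half hx0.le hx1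
      linarith
    rw [← Real.log_inv]
    have hx2 : (0:ℝ) < x / 2 := by positivity
    have h2 : (1 - t)⁻¹ ≤ 2 * φr / c := by
      calc (1-t)⁻¹ ≤ (x/2)⁻¹ := inv_anti₀ hx2 hkey
        _ = 2 * φr / c := by rw [hx]; field_simp
    exact Real.log_le_log (inv_pos.mpr (by linarith)) h2

lemma abs_log_abs_one_sub_le {w : ℂ} {t c φr : ℝ} (hc : 0 < c) (hφ : 0 < φr)
    (hw : ‖w‖ ≤ t) (hte : t ≤ Real.exp (-(c / φr))) :
    |Real.log (‖1 - w‖)| ≤ max (Real.log 2) (Real.log (2 * φr / c)) := by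
  have ht0 : 0 ≤ t := le_trans (norm_nonneg w) hw
  have ht1 : t < 1 := lt_of_le_of_lt hte (Real.exp_lt_one_iff.mpr (neg_lt_zero.mpr (by positivity)))
  have hlow : 1 - t ≤ ‖1 - w‖ := by
    have h := norm_sub_norm_le (1 : ℂ) w
    simp only [norm_one] at h
    linarith
  have hup : ‖1 - w‖ ≤ 2 := by
    have h := norm_sub_le (1 : ℂ) w
    simp only [norm_one] at h
    linarith
  rw [abs_le]
  constructor
  · have h1 : -Real.log (‖1 - w‖) ≤ -Real.log (1 - t) := by
      have := Real.log_le_log (by linarith) hlow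
      linarith
    have h2 := neg_log_one_sub_le hc hφ ht0 hte
    linarith [neg_le_of_neg_le (le_trans h1 h2)]
  · refine le_max_of_le_left ?_
    exact Real.log_le_log (by linarith [norm_pos_iff.mpr (show (1:ℂ) - w ≠ 0 by
      intro hcon
      have : ‖1 - w‖ = 0 := by rw [hcon, norm_zero]
      linarith)]) hup


lemma sum_abs_moebius_real (n : ℕ) (hn : 0 < n) :
    ∑ x ∈ n.divisorsAntidiagonal, |(μ x.1 : ℝ)| = 2 ^ n.primeFactors.card := by
  have h0 : ∑ x ∈ n.divisorsAntidiagonal, |(μ x.1 : ℝ)|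
      = ∑ d ∈ n.divisors, |(μ d : ℝ)| :=
    Nat.sum_divisorsAntidiagonal (fun a b => |(μ a : ℝ)|)
  rw [h0]
  calc ∑ d ∈ n.divisors, |(μ d : ℝ)|
      = ((∑ d ∈ n.divisors, |(μ d : ℤ)| : ℤ) : ℝ) := by push_cast; rfl
    _ = 2 ^ n.primeFactors.card := by rw [card_squarefree_divisors n hn.ne']; push_cast; rfl

lemma sum_bound {n : ℕ} (hn : 0 < n) {z : ℂ} {c : ℝ} (hc : 0 < c)
    (hz : Real.exp (c / (Nat.totient n : ℝ)) ≤ ‖z‖) :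
    |∑ x ∈ n.divisorsAntidiagonal, (μ x.1 : ℝ) * Real.log (‖1 - z⁻¹ ^ x.2‖)|
      ≤ 2 ^ n.primeFactors.card
        * max (Real.log 2) (Real.log (2 * (Nat.totient n : ℝ) / c)) := by
  set φr : ℝ := (Nat.totient n : ℝ) with hφr
  have hφ : 0 < φr := by
    rw [hφr]; exact_mod_cast Nat.totient_pos.mpr hn
  set t : ℝ := Real.exp (-(c / φr)) with htdef
  have ht1 : t < 1 := Real.exp_lt_one_iff.mpr (neg_lt_zero.mpr (by positivity))
  have ht0 : 0 < t := Real.exp_pos _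
  have hz1 : (1:ℝ) < ‖z‖ := lt_of_lt_of_le (Real.one_lt_exp_iff.mpr (by positivity)) hz
  have hz0 : ‖z‖ ≠ 0 := by positivity
  have hterm : ∀ x ∈ n.divisorsAntidiagonal,
      |Real.log (‖1 - z⁻¹ ^ x.2‖)|
        ≤ max (Real.log 2) (Real.log (2 * φr / c)) := by
    intro x hx
    have hx2 : 0 < x.2 := Nat.pos_of_mem_divisors (Nat.snd_mem_divisors_of_mem_antidiagonal hx)
    have hwt : ‖z⁻¹ ^ x.2‖ ≤ t := by
      rw [norm_pow, norm_inv]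
      have hinv : (‖z‖)⁻¹ ≤ t := by
        rw [htdef, Real.exp_neg]
        exact inv_anti₀ (Real.exp_pos _) hz
      calc (‖z‖)⁻¹ ^ x.2 ≤ t ^ x.2 := by
            apply pow_le_pow_left₀ (by positivity) hinv
        _ ≤ t ^ 1 := pow_le_pow_of_le_one ht0.le ht1.le hx2
        _ = t := pow_one t
    exact abs_log_abs_one_sub_le hc hφ hwt le_rfl
  calc |∑ x ∈ n.divisorsAntidiagonal, (μ x.1 : ℝ) * Real.log (‖1 - z⁻¹ ^ x.2‖)|
      ≤ ∑ x ∈ n.divisorsAntidiagonal, |(μ x.1 : ℝ) * Real.log (‖1 - z⁻¹ ^ x.2‖)| :=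
        Finset.abs_sum_le_sum_abs _ _
    _ ≤ ∑ x ∈ n.divisorsAntidiagonal,
          |(μ x.1 : ℝ)| * max (Real.log 2) (Real.log (2 * φr / c)) := by
        apply Finset.sum_le_sum
        intro x hx
        rw [abs_mul]
        exact mul_le_mul_of_nonneg_left (hterm x hx) (abs_nonneg _)
    _ = 2 ^ n.primeFactors.card * max (Real.log 2) (Real.log (2 * φr / c)) := by
        rw [← Finset.sum_mul, sum_abs_moebius_real n hn]


lemma lp_nonneg (t : ℝ) : 0 ≤ Real.log (max 1 t) :=
  Real.log_nonneg (le_max_left _ _)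

lemma lp_eq_log {t : ℝ} (h : 1 ≤ t) : Real.log (max 1 t) = Real.log t := by
  rw [max_eq_right h]

lemma lp_le {t B : ℝ} (hB : 0 ≤ B) (h : 1 ≤ t → Real.log t ≤ B) :
    Real.log (max 1 t) ≤ B := by
  rcases le_or_gt t 1 with ht | ht
  · rw [max_eq_left ht, Real.log_one]; exact hB
  · rw [max_eq_right ht.le]; exact h ht.le

lemma log_le_lp {t : ℝ} (ht : 0 ≤ t) : Real.log t ≤ Real.log (max 1 t) := by
  rcases le_or_gt t 1 with h | h
  · rw [max_eq_left h, Real.log_one]; exact Real.log_nonpos ht h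
  · rw [max_eq_right h.le]

lemma poly_max_modulus (p : Polynomial ℂ) {R A : ℝ} (hR : 0 < R)
    (hbound : ∀ w : ℂ, ‖w‖ = R → ‖p.eval w‖ ≤ A)
    {z : ℂ} (hz : ‖z‖ ≤ R) : ‖p.eval z‖ ≤ A := by
  have hd : DiffContOnCl ℂ (fun w => p.eval w) (Metric.ball 0 R) :=
    (p.differentiable).diffContOnCl
  have h := Complex.norm_le_of_forall_mem_frontier_norm_le Metric.isBounded_ball hd
    (C := A) ?_ (z := z) ?_
  · exact h
  · intro w hw
    rw [frontier_ball 0 hR.ne'] at hw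
    rw [mem_sphere_zero_iff_norm] at hw
    exact hbound w hw
  · rw [closure_ball 0 hR.ne', Metric.mem_closedBall, dist_zero_right]
    exact hz

set_option maxHeartbeats 2000000 in
lemma arch_bound (n : ℕ) (hn : 0 < n) (z : ℂ) :
    |Real.log (max 1 (‖(cyclotomic n ℂ).eval z‖))
      - (Nat.totient n : ℝ) * Real.log (max 1 (‖z‖))|
      ≤ 2 ^ n.primeFactors.card * Real.log (Real.pi * n) := by
  have hπ3 : (3:ℝ) < Real.pi := Real.pi_gt_three
  have hn1 : (1:ℝ) ≤ (n:ℝ) := by exact_mod_cast hn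
  have hπn3 : (3:ℝ) ≤ Real.pi * n := by nlinarith
  have hπn0 : (0:ℝ) < Real.pi * n := by linarith
  have he9 := Real.exp_one_lt_d9
  have hL1 : (1:ℝ) < Real.log (Real.pi * n) := by
    rw [Real.lt_log_iff_exp_lt hπn0]
    linarith
  have hlog2pi : Real.log 2 ≤ Real.log (Real.pi * n) :=
    Real.log_le_log (by norm_num) (by linarith)
  rcases eq_or_lt_of_le (Nat.succ_le_of_lt hn) with hn1' | hn2
  · -- n = 1
    have hne : n = 1 := hn1'.symm
    subst hne
    simp only [Nat.totient_one, Nat.cast_one, one_mul, mul_one, Nat.primeFactors_one,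
      Finset.card_empty, pow_zero, cyclotomic_one, eval_sub, eval_X, eval_one]
    rw [Nat.cast_one, mul_one] at hπn3 hπn0 hL1 hlog2pi
    rw [abs_le]
    constructor
    · -- lower : -log π ≤ lp|z-1| - lp|z|
      rcases le_or_gt (Real.log (max 1 (‖z‖))) (Real.log Real.pi) with h | h
      · have := lp_nonneg (‖z - 1‖); linarith
      · have hz1 : 1 < ‖z‖ := by
          by_contra hcon
          push_neg at hcon
          rw [max_eq_left hcon, Real.log_one] at h
          have := Real.log_nonneg (show (1:ℝ) ≤ Real.pi by linarith)
          linarith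
        rw [lp_eq_log hz1.le] at h ⊢
        have hzπ : Real.pi < ‖z‖ := by
          rwa [Real.log_lt_log_iff (by linarith) (by linarith)] at h
        have hsub : ‖z‖ / Real.pi ≤ ‖z - 1‖ := by
          have h1 : ‖z‖ - 1 ≤ ‖z - 1‖ := by
            have := norm_sub_norm_le z (1:ℂ)
            simpa using this
          have h2 : ‖z‖ / Real.pi ≤ ‖z‖ - 1 := by
            rw [div_le_iff₀ (by linarith)]
            nlinarith
          linarith
        have h1lt : (1:ℝ) < ‖z‖ / Real.pi := by
          rw [lt_div_iff₀ (by linarith)]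
          nlinarith
        rw [lp_eq_log (by linarith : (1:ℝ) ≤ ‖z-1‖)]
        have := Real.log_le_log (by linarith) hsub
        rw [Real.log_div (by positivity) (by positivity)] at this
        linarith
    · -- upper : lp|z-1| - lp|z| ≤ log π
      have hkey : Real.log (max 1 (‖z - 1‖))
          ≤ Real.log (max 1 (‖z‖)) + Real.log Real.pi := by
        apply lp_le (by linarith [lp_nonneg (‖z‖),
          Real.log_nonneg (show (1:ℝ) ≤ Real.pi by linarith)])
        intro h1
        have hb : ‖z - 1‖ ≤ Real.pi * max 1 (‖z‖) := by
          have h2 : ‖z - 1‖ ≤ ‖z‖ + 1 := by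
            have := norm_sub_le z (1:ℂ)
            simpa using this
          have h3 : ‖z‖ ≤ max 1 (‖z‖) := le_max_right _ _
          have h4 : (1:ℝ) ≤ max 1 (‖z‖) := le_max_left _ _
          nlinarith
        calc Real.log (‖z - 1‖) ≤ Real.log (Real.pi * max 1 (‖z‖)) :=
              Real.log_le_log (by linarith) hb
          _ = Real.log Real.pi + Real.log (max 1 (‖z‖)) := by
              rw [Real.log_mul (by positivity) (by positivity)]
        linarith [lp_nonneg (‖z‖)]
      linarith [lp_nonneg (‖z‖)]
  · -- n ≥ 2
    have hω1 : 1 ≤ n.primeFactors.card := by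
      obtain ⟨p, hp, hpd⟩ := Nat.exists_prime_and_dvd (show n ≠ 1 by omega)
      have : p ∈ n.primeFactors := Nat.mem_primeFactors.mpr ⟨hp, hpd, by omega⟩
      exact Finset.card_pos.mpr ⟨p, this⟩
    set φr : ℝ := (Nat.totient n : ℝ) with hφrdef
    have hφ1 : (1:ℝ) ≤ φr := by
      rw [hφrdef]; exact_mod_cast Nat.totient_pos.mpr hn
    have hφn : φr ≤ (n:ℝ) := by rw [hφrdef]; exact_mod_cast Nat.totient_le n
    set P : ℝ := 2 ^ n.primeFactors.card with hPdef
    have hP2 : (2:ℝ) ≤ P := by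
      rw [hPdef]
      calc (2:ℝ) = 2 ^ 1 := (pow_one 2).symm
        _ ≤ 2 ^ n.primeFactors.card := by
          apply pow_le_pow_right₀ (by norm_num) hω1
    have hP0 : (0:ℝ) < P := by linarith
    set C : ℝ := P * Real.log (Real.pi * n) with hCdef
    have hC1 : (1:ℝ) ≤ C := by nlinarith
    have habsz : (0:ℝ) ≤ ‖z‖ := norm_nonneg z
    rw [abs_le]
    constructor
    · -- LOWER
      rcases le_or_gt (φr * Real.log (max 1 (‖z‖))) C with hcase | hcase
      · have := lp_nonneg (‖(cyclotomic n ℂ).eval z‖); linarith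
      · have hz1 : 1 < ‖z‖ := by
          by_contra hcon
          push_neg at hcon
          rw [max_eq_left hcon, Real.log_one, mul_zero] at hcase
          linarith
        rw [lp_eq_log hz1.le] at hcase ⊢
        have hlogz0 : 0 < Real.log (‖z‖) := Real.log_pos hz1
        have hzC : Real.exp (C / φr) ≤ ‖z‖ := by
          rw [← Real.exp_log (show (0:ℝ) < ‖z‖ by linarith)]
          apply Real.exp_le_exp.mpr
          rw [div_le_iff₀ (by linarith)]
          nlinarith
        have hS := sum_bound hn (show (0:ℝ) < C by linarith) hzC
        have hid := log_cyclotomic_eval hn hz1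
        have hmax : max (Real.log 2) (Real.log (2 * φr / C)) ≤ Real.log (Real.pi * n) := by
          apply max_le hlog2pi
          apply Real.log_le_log (by positivity)
          rw [div_le_iff₀ (by linarith)]
          nlinarith
        have hSb := abs_le.mp hS
        have h1 : φr * Real.log (‖z‖) - C
            ≤ Real.log (‖(cyclotomic n ℂ).eval z‖) := by
          rw [hid]
          have : P * max (Real.log 2) (Real.log (2 * φr / C)) ≤ C := by
            rw [hCdef]
            nlinarith [mul_le_mul_of_nonneg_left hmax hP0.le]
          linarith [hSb.1]
        have h2 := log_le_lp (norm_nonneg ((cyclotomic n ℂ).eval z))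
        linarith
    · -- UPPER
      rcases le_or_gt (Real.exp (P / φr)) (‖z‖) with hcase | hcase
      · -- large |z|
        have hz1 : 1 < ‖z‖ :=
          lt_of_lt_of_le (Real.one_lt_exp_iff.mpr (by positivity)) hcase
        have hS := sum_bound hn hP0 hcase
        have hid := log_cyclotomic_eval hn hz1
        have hmax : max (Real.log 2) (Real.log (2 * φr / P)) ≤ Real.log (Real.pi * n) := by
          apply max_le hlog2pi
          apply Real.log_le_log (by positivity)
          rw [div_le_iff₀ (by linarith)]
          nlinarith
        have hSb := abs_le.mp hS
        have hup : Real.log (‖(cyclotomic n ℂ).eval z‖)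
            ≤ φr * Real.log (‖z‖) + C := by
          rw [hid]
          have : P * max (Real.log 2) (Real.log (2 * φr / P)) ≤ C := by
            rw [hCdef]
            nlinarith [mul_le_mul_of_nonneg_left hmax hP0.le]
          linarith [hSb.2]
        have hfin : Real.log (max 1 (‖(cyclotomic n ℂ).eval z‖))
            ≤ φr * Real.log (max 1 (‖z‖)) + C := by
          apply lp_le
          · have := lp_nonneg (‖z‖); nlinarith
          · intro h1
            rw [lp_eq_log hz1.le]
            exact hup
        linarith
      · -- small |z| : maximum modulus
        have hRb1 : (1:ℝ) < Real.exp (P / φr) := Real.one_lt_exp_iff.mpr (by positivity)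
        have hbound : ∀ w : ℂ, ‖w‖ = Real.exp (P / φr) →
            ‖(cyclotomic n ℂ).eval w‖ ≤ Real.exp C := by
          intro w hw
          have hw1 : 1 < ‖w‖ := by rw [hw]; exact hRb1
          have hwge : Real.exp (P / φr) ≤ ‖w‖ := le_of_eq hw.symm
          have hS := sum_bound hn hP0 hwge
          have hSb := abs_le.mp hS
          have hid := log_cyclotomic_eval hn hw1
          have hlogw : Real.log (‖w‖) = P / φr := by rw [hw, Real.log_exp]
          have hPmax : P + P * max (Real.log 2) (Real.log (2 * φr / P))
              ≤ C := by
            have hn2r : (2:ℝ) ≤ (n:ℝ) := by exact_mod_cast hn2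
            have h3n : (3:ℝ) * n ≤ Real.pi * n := by nlinarith
            have hm2 : Real.log 2 ≤ Real.log (Real.pi * n) - 1 := by
              have he : Real.log 2 + 1 = Real.log (2 * Real.exp 1) := by
                rw [Real.log_mul (by norm_num) (Real.exp_ne_zero 1), Real.log_exp]
              have h6 : (2:ℝ) * Real.exp 1 ≤ Real.pi * n := by nlinarith
              have h7 : Real.log (2 * Real.exp 1) ≤ Real.log (Real.pi * n) :=
                Real.log_le_log (by positivity) h6
              linarith
            have hm3 : Real.log (2 * φr / P) ≤ Real.log (Real.pi * n) - 1 := by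
              have h7 : (2 * φr / P) * Real.exp 1 ≤ Real.pi * n := by
                have h8 : 2 * φr / P ≤ φr := by
                  rw [div_le_iff₀ (by linarith)]; nlinarith
                nlinarith [mul_le_mul_of_nonneg_right h8 (Real.exp_pos 1).le]
              have h9 : Real.log ((2 * φr / P) * Real.exp 1) ≤ Real.log (Real.pi * n) :=
                Real.log_le_log (by positivity) h7
              rw [Real.log_mul (by positivity) (Real.exp_ne_zero 1), Real.log_exp] at h9
              linarith
            have hmaxle : max (Real.log 2) (Real.log (2 * φr / P))
                ≤ Real.log (Real.pi * n) - 1 := max_le hm2 hm3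
            rw [hCdef]
            nlinarith [mul_le_mul_of_nonneg_left hmaxle hP0.le]
          have hlogC : Real.log (‖(cyclotomic n ℂ).eval w‖) ≤ C := by
            rw [hid, hlogw]
            have hid2 : φr * (P / φr) = P := by field_simp
            rw [hid2]
            linarith [hSb.2]
          have hpos : 0 < ‖(cyclotomic n ℂ).eval w‖ :=
            norm_pos_iff.mpr (cyclotomic_eval_ne_zero' hn hw1)
          rw [← Real.exp_log hpos]
          exact Real.exp_le_exp.mpr hlogC
        have hmm := poly_max_modulus (cyclotomic n ℂ) (by linarith) hbound hcase.le
        have hfin : Real.log (max 1 (‖(cyclotomic n ℂ).eval z‖)) ≤ C := by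
          apply lp_le (by linarith)
          intro h1
          calc Real.log (‖(cyclotomic n ℂ).eval z‖)
              ≤ Real.log (Real.exp C) := Real.log_le_log (by linarith) hmm
            _ = C := Real.log_exp C
        have hpos2 : 0 ≤ φr * Real.log (max 1 (‖z‖)) := by
          have := lp_nonneg (‖z‖); nlinarith
        linarith

end MoebiusLemmas

section Nonarch
open Finset ArithmeticFunction
open scoped ArithmeticFunction.Moebius
open scoped Multiplicative


variable {K : Type*} [Field K] [NumberField K]

lemma val_eq_ofAdd_neg_nuP (v : HeightOneSpectrum (𝓞 K)) {x : K} (hx : x ≠ 0) :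
    v.valuation K x = WithZero.coe (Multiplicative.ofAdd (-(nuP v x))) := by
  simp only [nuP, dif_neg hx, neg_neg, ofAdd_toAdd, WithZero.coe_unzero]

lemma val_coeff_le_one (v : HeightOneSpectrum (𝓞 K)) (k : ℤ) :
    v.valuation K ((k : K)) ≤ 1 := by
  have h : ((k : K)) = algebraMap (𝓞 K) K ((k : ℤ) : 𝓞 K) := by
    rw [map_intCast]
  rw [h]
  exact v.valuation_le_one _

lemma val_cyclotomic_coeff_le_one (v : HeightOneSpectrum (𝓞 K)) (n i : ℕ) :
    v.valuation K ((cyclotomic n K).coeff i) ≤ 1 := by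
  have h : (cyclotomic n K).coeff i = ((cyclotomic n ℤ).coeff i : K) := by
    rw [← map_cyclotomic_int n K, Polynomial.coeff_map]
    rfl
  rw [h]
  exact val_coeff_le_one v _

lemma val_le_one_of_le_one (v : HeightOneSpectrum (𝓞 K)) {γ : K}
    (hγ : v.valuation K γ ≤ 1) (n : ℕ) (hn : 0 < n) :
    v.valuation K ((cyclotomic n K).eval γ) ≤ 1 := by
  rw [Polynomial.eval_eq_sum_range]
  apply Valuation.map_sum_le
  intro i _
  rw [Valuation.map_mul]
  calc v.valuation K ((cyclotomic n K).coeff i) * v.valuation K (γ ^ i)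
      ≤ 1 * 1 := by
        apply mul_le_mul' (val_cyclotomic_coeff_le_one v n i)
        rw [Valuation.map_pow]
        exact pow_le_one' hγ i
    _ = 1 := mul_one 1

lemma ofAdd_le_one {a : ℤ} :
    (WithZero.coe (Multiplicative.ofAdd a) : WithZero (Multiplicative ℤ)) ≤ 1 ↔ a ≤ 0 := by
  rw [← WithZero.coe_one, WithZero.coe_le_coe, ← ofAdd_zero, Multiplicative.ofAdd_le]

lemma nuP_nonarch (γ : K) {n : ℕ} (hn : 0 < n) (v : HeightOneSpectrum (𝓞 K)) :
    (max 0 (-(nuP v ((cyclotomic n K).eval γ))) : ℤ)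
      = (Nat.totient n : ℤ) * max 0 (-(nuP v γ)) := by
  set x : K := (cyclotomic n K).eval γ with hxdef
  by_cases hx0 : x = 0
  · -- γ is a root of unity; val γ = 1
    have hγn : γ ^ n = 1 := by
      have h1 : (X ^ n - 1 : Polynomial K).eval γ = 0 := by
        rw [← prod_cyclotomic_eq_X_pow_sub_one hn K, Polynomial.eval_prod]
        exact Finset.prod_eq_zero (Nat.mem_divisors_self n hn.ne') hx0
      have h2 : γ ^ n - 1 = 0 := by simpa using h1
      rw [sub_eq_zero] at h2
      exact h2
    have hγ0 : γ ≠ 0 := by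
      intro h
      rw [h] at hγn
      simp [zero_pow hn.ne'] at hγn
    have hnuγ : nuP v γ = 0 := by
      have h1 : (v.valuation K γ) ^ n = 1 := by
        rw [← Valuation.map_pow, hγn, Valuation.map_one]
      have h2 := val_eq_ofAdd_neg_nuP v hγ0
      rw [h2, ← WithZero.coe_pow, ← WithZero.coe_one, WithZero.coe_inj] at h1
      have h3 := congrArg Multiplicative.toAdd h1
      simp only [toAdd_pow, toAdd_ofAdd, toAdd_one, smul_neg, neg_eq_zero,
        nsmul_eq_mul] at h3
      rcases mul_eq_zero.mp h3 with h | h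
      · exact absurd h (by exact_mod_cast hn.ne')
      · exact h
    have hnux : nuP v x = 0 := by rw [nuP, dif_pos hx0]
    rw [hnux, hnuγ]
    simp
  · rcases le_or_gt (v.valuation K γ) 1 with hγle | hγgt
    · -- both sides vanish
      have hvx : v.valuation K x ≤ 1 := val_le_one_of_le_one v hγle n hn
      have hnx : -(nuP v x) ≤ 0 := by
        rw [val_eq_ofAdd_neg_nuP v hx0] at hvx
        exact ofAdd_le_one.mp hvx
      have hrhs : max 0 (-(nuP v γ)) = 0 := by
        by_cases hγ0 : γ = 0
        · rw [hγ0]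
          rw [show nuP v (0:K) = 0 from by rw [nuP, dif_pos rfl]]
          simp
        · have h : -(nuP v γ) ≤ 0 := by
            rw [val_eq_ofAdd_neg_nuP v hγ0] at hγle
            exact ofAdd_le_one.mp hγle
          exact max_eq_left h
      rw [hrhs, max_eq_left hnx, mul_zero]
    · -- the valuation of γ is > 1
      have hγ0 : γ ≠ 0 := by
        intro h
        rw [h, Valuation.map_zero] at hγgt
        exact not_lt_of_ge zero_le' hγgt
      set m : ℤ := -(nuP v γ) with hmdef
      have hvγ : v.valuation K γ = WithZero.coe (Multiplicative.ofAdd m) :=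
        val_eq_ofAdd_neg_nuP v hγ0
      have hm0 : 0 < m := by
        rw [hvγ, ← WithZero.coe_one, WithZero.coe_lt_coe, ← ofAdd_zero,
          Multiplicative.ofAdd_lt] at hγgt
        exact hγgt
      set φ : ℕ := Nat.totient n with hφdef
      have hφpos : 0 < φ := Nat.totient_pos.mpr hn
      set q : Polynomial K := cyclotomic n K - X ^ φ with hqdef
      have hdeg : q.natDegree < φ := by
        rcases eq_or_ne q 0 with h | h
        · rw [h]; simpa using hφpos
        · rw [Polynomial.natDegree_lt_iff_degree_lt h]
          have hd1 : (X ^ φ : Polynomial K).degree = (cyclotomic n K).degree := by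
            rw [degree_cyclotomic, degree_X_pow]
          have hd2 : (cyclotomic n K).degree = (φ : WithBot ℕ) := by
            rw [degree_cyclotomic]
          rw [← hd2]
          apply Polynomial.degree_sub_lt hd1.symm (cyclotomic_ne_zero n K)
          rw [(cyclotomic.monic n K).leadingCoeff, (monic_X_pow φ).leadingCoeff]
      have hxeq : x = γ ^ φ + q.eval γ := by
        rw [hqdef, hxdef]
        simp only [eval_sub, eval_pow, eval_X]
        ring
      have hγφ : v.valuation K (γ ^ φ) = WithZero.coe ((Multiplicative.ofAdd m) ^ φ) := by
        rw [Valuation.map_pow, hvγ, WithZero.coe_pow]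
      have hvq : v.valuation K (q.eval γ) < v.valuation K (γ ^ φ) := by
        rw [Polynomial.eval_eq_sum_range' hdeg]
        apply Valuation.map_sum_lt
        · rw [Valuation.map_pow]
          exact pow_ne_zero _ ((Valuation.ne_zero_iff _).mpr hγ0)
        · intro i hi
          rw [Finset.mem_range] at hi
          have hcoeff : v.valuation K (q.coeff i) ≤ 1 := by
            rw [hqdef, Polynomial.coeff_sub, Polynomial.coeff_X_pow,
              if_neg (by omega), sub_zero]
            exact val_cyclotomic_coeff_le_one v n i
          rw [Valuation.map_mul]
          calc v.valuation K (q.coeff i) * v.valuation K (γ ^ i)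
              ≤ 1 * v.valuation K (γ ^ i) := mul_le_mul_left hcoeff _
            _ = v.valuation K (γ ^ i) := one_mul _
            _ < v.valuation K (γ ^ φ) := by
                rw [Valuation.map_pow, Valuation.map_pow, hvγ, ← WithZero.coe_pow,
                  ← WithZero.coe_pow, WithZero.coe_lt_coe, ← ofAdd_nsmul, ← ofAdd_nsmul,
                  Multiplicative.ofAdd_lt, nsmul_eq_mul, nsmul_eq_mul]
                exact mul_lt_mul_of_pos_right (by exact_mod_cast hi) hm0
      have hvx : v.valuation K x = WithZero.coe (Multiplicative.ofAdd ((φ : ℤ) * m)) := by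
        rw [hxeq, Valuation.map_add_eq_of_lt_left _ hvq, hγφ, ← ofAdd_nsmul, nsmul_eq_mul]
      have hnux : -(nuP v x) = (φ : ℤ) * m := by
        have h2 := val_eq_ofAdd_neg_nuP v hx0
        rw [hvx] at h2
        have h3 := WithZero.coe_inj.mp h2
        have h4 := congrArg Multiplicative.toAdd h3
        simpa [mul_comm] using h4.symm
      rw [hnux]
      rw [max_eq_right (by positivity : (0:ℤ) ≤ (φ:ℤ) * m), max_eq_right hm0.le, hφdef]

end Nonarch


/-- **Proposition (height of cyclotomic values).** For an algebraic number `γ` and a positive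
integer `n`, `|h(Φ_n(γ)) − φ(n)·h(γ)| ≤ 2^{ω(n)}·log(π·n)`. -/
theorem height_cyclotomic_value (K : Type*) [Field K] [NumberField K]
    (γ : K) (n : ℕ) (hn : 0 < n) :
    |logHeight ((Polynomial.cyclotomic n K).eval γ) - (Nat.totient n : ℝ) * logHeight γ| ≤
      2 ^ n.primeFactors.card * Real.log (Real.pi * n) := by
  set x : K := (cyclotomic n K).eval γ with hxdef
  set D : ℕ := Module.finrank ℚ K with hDdef
  have hD0 : 0 < D := Module.finrank_pos
  have hcard : Fintype.card (K →+* ℂ) = D := NumberField.Embeddings.card K ℂ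
  set φr : ℝ := (Nat.totient n : ℝ) with hφrdef
  set C : ℝ := 2 ^ n.primeFactors.card * Real.log (Real.pi * n) with hCdef
  have hC0 : 0 ≤ C := by
    rw [hCdef]
    have hπ3 : (3:ℝ) < Real.pi := Real.pi_gt_three
    have hn1 : (1:ℝ) ≤ (n:ℝ) := by exact_mod_cast hn
    have h1 : (1:ℝ) ≤ Real.pi * n := by nlinarith
    have h2 : (0:ℝ) ≤ Real.log (Real.pi * n) := Real.log_nonneg h1
    positivity
  -- finite part
  have hfin : (∑ᶠ v : HeightOneSpectrum (𝓞 K),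
        ((max 0 (-(nuP v x)) : ℤ) : ℝ) * Real.log (Ideal.absNorm v.asIdeal))
      = φr * ∑ᶠ v : HeightOneSpectrum (𝓞 K),
        ((max 0 (-(nuP v γ)) : ℤ) : ℝ) * Real.log (Ideal.absNorm v.asIdeal) := by
    have hpt : ∀ v : HeightOneSpectrum (𝓞 K),
        ((max 0 (-(nuP v x)) : ℤ) : ℝ) * Real.log (Ideal.absNorm v.asIdeal)
          = φr • (((max 0 (-(nuP v γ)) : ℤ) : ℝ) * Real.log (Ideal.absNorm v.asIdeal)) := by
      intro v
      have h := nuP_nonarch γ hn v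
      rw [smul_eq_mul, hφrdef]
      rw [hxdef] at *
      push_cast [h]
      ring
    calc (∑ᶠ v : HeightOneSpectrum (𝓞 K),
        ((max 0 (-(nuP v x)) : ℤ) : ℝ) * Real.log (Ideal.absNorm v.asIdeal))
        = ∑ᶠ v : HeightOneSpectrum (𝓞 K),
            φr • (((max 0 (-(nuP v γ)) : ℤ) : ℝ) * Real.log (Ideal.absNorm v.asIdeal)) :=
          finsum_congr hpt
      _ = φr • ∑ᶠ v : HeightOneSpectrum (𝓞 K),
            ((max 0 (-(nuP v γ)) : ℤ) : ℝ) * Real.log (Ideal.absNorm v.asIdeal) :=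
          (smul_finsum φr _).symm
      _ = φr * _ := by rw [smul_eq_mul]
  -- archimedean part
  have harch : ∀ σ : K →+* ℂ,
      |Real.log (max 1 (‖σ x‖)) - φr * Real.log (max 1 (‖σ γ‖))|
        ≤ C := by
    intro σ
    have hσ : σ x = (cyclotomic n ℂ).eval (σ γ) := by
      rw [hxdef]
      exact (cyclotomic.eval_apply γ n σ).symm
    rw [hσ]
    exact arch_bound n hn (σ γ)
  -- put it together
  rw [logHeight, logHeight, ← hDdef, hfin]
  have hexp : (D : ℝ)⁻¹ * ((∑ σ : K →+* ℂ, Real.log (max 1 (‖σ x‖)))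
        + φr * ∑ᶠ v : HeightOneSpectrum (𝓞 K),
            ((max 0 (-(nuP v γ)) : ℤ) : ℝ) * Real.log (Ideal.absNorm v.asIdeal))
      - φr * ((D : ℝ)⁻¹ * ((∑ σ : K →+* ℂ, Real.log (max 1 (‖σ γ‖)))
        + ∑ᶠ v : HeightOneSpectrum (𝓞 K),
            ((max 0 (-(nuP v γ)) : ℤ) : ℝ) * Real.log (Ideal.absNorm v.asIdeal)))
      = (D : ℝ)⁻¹ * ∑ σ : K →+* ℂ,
          (Real.log (max 1 (‖σ x‖))
            - φr * Real.log (max 1 (‖σ γ‖))) := by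
    rw [Finset.sum_sub_distrib, ← Finset.mul_sum]
    ring
  rw [hexp, abs_mul, abs_inv, Nat.abs_cast]
  have hsum : |∑ σ : K →+* ℂ, (Real.log (max 1 (‖σ x‖))
      - φr * Real.log (max 1 (‖σ γ‖)))| ≤ (D : ℝ) * C := by
    calc |∑ σ : K →+* ℂ, (Real.log (max 1 (‖σ x‖))
        - φr * Real.log (max 1 (‖σ γ‖)))|
        ≤ ∑ σ : K →+* ℂ, |Real.log (max 1 (‖σ x‖))
            - φr * Real.log (max 1 (‖σ γ‖))| := Finset.abs_sum_le_sum_abs _ _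
      _ ≤ ∑ _σ : K →+* ℂ, C := Finset.sum_le_sum fun σ _ => harch σ
      _ = (Fintype.card (K →+* ℂ) : ℝ) * C := by
          rw [Finset.sum_const, Finset.card_univ, nsmul_eq_mul]
      _ = (D : ℝ) * C := by rw [hcard]
  have hDinv : (0:ℝ) < (D : ℝ) := by exact_mod_cast hD0
  calc ((D:ℝ))⁻¹ * |∑ σ : K →+* ℂ, (Real.log (max 1 (‖σ x‖))
      - φr * Real.log (max 1 (‖σ γ‖)))|
      ≤ ((D:ℝ))⁻¹ * ((D : ℝ) * C) := by
        apply mul_le_mul_of_nonneg_left hsum (by positivity)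
    _ = C := by field_simp
end

section
/- Let γ be an algebraic number of degree 2 over ℚ with N_{ℚ(γ)/ℚ}(γ) = 1, not a root of unity, let K = ℚ(γ), and set u_m = γ^m − 1 for positive integers m. If a prime 𝔭 of K is a primitive divisor of u_n and p is the rational prime underlying 𝔭, then p ≡ 1 (mod n) or p ≡ −1 (mod n). -/
open NumberField IsDedekindDomain Module
open scoped Classical

section Rep
variable {R : Type*} [CommRing R] [IsDedekindDomain R] {K : Type*} [Field K]
  [Algebra R K] [IsFractionRing R K] (v : HeightOneSpectrum R)

theorem my_intValuation_eq_one_iff (y : R) :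
    v.intValuation y = 1 ↔ y ∉ v.asIdeal := by
  have hdef : v.intValuationDef y = v.intValuation y := rfl
  constructor
  · intro h hmem
    have hlt : v.intValuationDef y < 1 := by
      rw [hdef, v.intValuation_lt_one_iff_dvd, Ideal.dvd_span_singleton]
      exact hmem
    rw [hdef, h] at hlt
    exact lt_irrefl _ hlt
  · intro hmem
    have hle : v.intValuationDef y ≤ 1 := v.intValuation_le_one y
    rcases lt_or_eq_of_le hle with hlt | h
    · rw [hdef, v.intValuation_lt_one_iff_dvd, Ideal.dvd_span_singleton] at hlt
      exact absurd hlt hmem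
    · rw [← hdef]; exact h

theorem my_valuation_lt_one_iff (y : R) :
    v.valuation K (algebraMap R K y) < 1 ↔ y ∈ v.asIdeal := by
  rw [v.valuation_lt_one_iff_dvd, Ideal.dvd_span_singleton]

/-- An element of `K` with `v`-adic valuation `1` can be written `a/s` with `a, s ∉ 𝔭`. -/
theorem exists_rep (γ : K) (hγ : γ ≠ 0) (h1 : v.valuation K γ = 1) :
    ∃ a s : R, a ∉ v.asIdeal ∧ s ∉ v.asIdeal ∧ γ * algebraMap R K s = algebraMap R K a := by
  obtain ⟨⟨r, s⟩, hmk : IsLocalization.mk' K r s = γ⟩ :=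
    IsLocalization.mk'_surjective (nonZeroDivisors R) γ
  have hs0 : (s : R) ≠ 0 := nonZeroDivisors.coe_ne_zero s
  have hr0 : r ≠ 0 := by
    rintro rfl
    rw [IsLocalization.mk'_zero] at hmk
    exact hγ hmk.symm
  have hvs0 : v.intValuation (s : R) ≠ 0 := v.intValuation_ne_zero _ hs0
  have hval : v.intValuation r = v.intValuation (s : R) := by
    have := v.valuation_of_mk' (K := K) (r := r) (s := s)
    rw [hmk, h1] at this
    have h2 : v.intValuationDef r = v.intValuationDef (s : R) := by
      rw [eq_comm, div_eq_one_iff_eq hvs0] at this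
      exact this
    exact h2
  obtain ⟨u, hu⟩ : ∃ u : Multiplicative ℤ, v.intValuation (s : R) = (u : WithZero (Multiplicative ℤ)) :=
    ⟨WithZero.unzero hvs0, (WithZero.coe_unzero hvs0).symm⟩
  have hule : v.intValuation (s : R) ≤ 1 := v.intValuation_le_one _
  have htoAdd : Multiplicative.toAdd u ≤ 0 := by
    rw [hu] at hule
    rwa [← WithZero.coe_one, WithZero.coe_le_coe, ← Multiplicative.toAdd_le, toAdd_one] at hule
  set k : ℕ := (-Multiplicative.toAdd u).toNat with hk
  have hknat : -(k : ℤ) = Multiplicative.toAdd u := by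
    rw [hk, Int.toNat_of_nonneg (by omega)]; ring
  have hus : v.intValuation (s : R) = Multiplicative.ofAdd (-(k : ℤ)) := by
    rw [hu, hknat]
    norm_cast
  have hdef : ∀ y : R, v.intValuationDef y = v.intValuation y := fun y => rfl
  have hPk_s : v.asIdeal ^ k ∣ Ideal.span {(s : R)} :=
    (v.intValuation_le_pow_iff_dvd _ k).mp (by rw [hus, WithZero.exp_eq_coe_ofAdd])
  have hPk_r : v.asIdeal ^ k ∣ Ideal.span {r} :=
    (v.intValuation_le_pow_iff_dvd _ k).mp (by rw [hval, hus, WithZero.exp_eq_coe_ofAdd])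
  have hnot : ¬ v.asIdeal ^ (k + 1) ∣ Ideal.span {(s : R)} := by
    intro hdvd
    have hle2 := (v.intValuation_le_pow_iff_dvd (s : R) (k + 1)).mpr hdvd
    rw [hus, WithZero.exp_eq_coe_ofAdd, WithZero.coe_le_coe, Multiplicative.ofAdd_le] at hle2
    omega
  obtain ⟨Q, hQ⟩ := hPk_s
  have hQP : ¬ Q ≤ v.asIdeal := by
    intro hle
    apply hnot
    rw [hQ, pow_succ]
    exact mul_dvd_mul_left _ (Ideal.dvd_iff_le.mpr hle)
  obtain ⟨x, hxQ, hxP⟩ := SetLike.not_le_iff_exists.mp hQP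
  have hcop : IsCoprime (v.asIdeal ^ k) Q := by
    apply IsCoprime.pow_left
    rw [Ideal.isCoprime_iff_sup_eq]
    have hmax : v.asIdeal.IsMaximal := Ideal.IsPrime.isMaximal v.isPrime v.ne_bot
    by_contra hne
    have heq2 := hmax.eq_of_le hne le_sup_left
    exact hQP (heq2 ▸ le_sup_right)
  have hdvd : Ideal.span {(s : R)} ∣ Ideal.span {r * x} := by
    rw [hQ, ← Ideal.span_singleton_mul_span_singleton]
    exact hcop.mul_dvd (dvd_mul_of_dvd_left hPk_r _)
      (dvd_mul_of_dvd_right (Ideal.dvd_span_singleton.mpr hxQ) _)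
  have hsdvd : (s : R) ∣ r * x := by
    rwa [Ideal.dvd_iff_le, Ideal.span_singleton_le_span_singleton] at hdvd
  obtain ⟨a, ha⟩ := hsdvd
  have hsK : algebraMap R K (s : R) ≠ 0 := by
    rw [Ne, IsFractionRing.to_map_eq_zero_iff]
    exact hs0
  have heq : γ * algebraMap R K x = algebraMap R K a := by
    have hspec : γ * algebraMap R K (s : R) = algebraMap R K r := by
      rw [← hmk, mul_comm]; exact IsLocalization.mk'_spec' K r s
    have : γ * algebraMap R K x * algebraMap R K (s : R)
        = algebraMap R K a * algebraMap R K (s : R) := by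
      rw [mul_right_comm, hspec, ← map_mul, ← map_mul, mul_comm a _, ← ha, mul_comm r x]
    exact mul_right_cancel₀ hsK this
  have hxval : v.intValuation x = 1 := (my_intValuation_eq_one_iff v x).mpr hxP
  have haval : v.intValuation a = 1 := by
    have h2 : v.valuation K (algebraMap R K a) = 1 := by
      rw [← heq, Valuation.map_mul, h1, one_mul, v.valuation_of_algebraMap, hxval]
    rwa [v.valuation_of_algebraMap] at h2
  exact ⟨a, x, (my_intValuation_eq_one_iff v a).mp haval, hxP, heq⟩
end Rep

section NuP
variable {K : Type*} [Field K] [NumberField K]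

theorem nuP_eq (v : HeightOneSpectrum (𝓞 K)) {x : K} (hx : x ≠ 0) :
    v.valuation K x = ((Multiplicative.ofAdd (-(nuP v x)) : Multiplicative ℤ) :
      WithZero (Multiplicative ℤ)) := by
  rw [nuP, dif_neg hx, neg_neg, ofAdd_toAdd, WithZero.coe_unzero]

theorem nuP_lt_one (v : HeightOneSpectrum (𝓞 K)) {x : K} (hx : x ≠ 0) (h : 1 ≤ nuP v x) :
    v.valuation K x < 1 := by
  rw [nuP_eq v hx, ← WithZero.coe_one, WithZero.coe_lt_coe, ← ofAdd_zero,
    Multiplicative.ofAdd_lt]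
  omega

theorem nuP_eq_one (v : HeightOneSpectrum (𝓞 K)) {x : K} (hx : x ≠ 0) (h : nuP v x = 0) :
    v.valuation K x = 1 := by
  rw [nuP_eq v hx, h, neg_zero, ofAdd_zero, WithZero.coe_one]
end NuP

open Polynomial in
/-- Quadratic relation: any element of a field of degree 2 over ℚ with norm 1
satisfies `γ² + 1 = t γ` for some rational `t`. -/
theorem quadratic_relation {K : Type*} [Field K] [NumberField K]
    (hK : Module.finrank ℚ K = 2) (γ : K) (hnorm : Algebra.norm ℚ γ = 1) :
    ∃ t : ℚ, γ ^ 2 + 1 = algebraMap ℚ K t * γ := by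
  let B : Basis (Fin 2) ℚ K := Module.finBasisOfFinrankEq ℚ K hK
  set f : Module.End ℚ K := Algebra.lmul ℚ K γ with hf
  set M : Matrix (Fin 2) (Fin 2) ℚ := LinearMap.toMatrix B B f with hM
  have hdet : M.det = 1 := by
    rw [hM, LinearMap.det_toMatrix]
    rw [Algebra.norm_apply] at hnorm
    exact hnorm
  have hCH : Polynomial.aeval γ M.charpoly = 0 := by
    have h2 : M.charpoly = f.charpoly := LinearMap.charpoly_toMatrix f B
    have h3 := Polynomial.aeval_algHom_apply (Algebra.lmul ℚ K) γ f.charpoly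
    have h4 : Algebra.lmul ℚ K (Polynomial.aeval γ f.charpoly) = 0 := by
      rw [← h3]
      exact LinearMap.aeval_self_charpoly f
    have h5 := congrArg (fun φ : Module.End ℚ K => φ 1) h4
    simp only [Algebra.lmul, LinearMap.zero_apply] at h5
    rw [h2]
    simpa using h5
  have hch : M.charpoly = (X - C (M 0 0)) * (X - C (M 1 1)) - C (M 0 1) * C (M 1 0) := by
    rw [Matrix.charpoly, Matrix.det_fin_two, Matrix.charmatrix_apply_eq,
      Matrix.charmatrix_apply_eq, Matrix.charmatrix_apply_ne _ _ _ (by decide),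
      Matrix.charmatrix_apply_ne _ _ _ (by decide)]
    ring
  rw [hch] at hCH
  simp only [map_sub, map_mul, Polynomial.aeval_X, Polynomial.aeval_C] at hCH
  have hdetK : algebraMap ℚ K (M 0 0) * algebraMap ℚ K (M 1 1)
      - algebraMap ℚ K (M 0 1) * algebraMap ℚ K (M 1 0) = 1 := by
    rw [← map_mul, ← map_mul, ← map_sub,
      show M 0 0 * M 1 1 - M 0 1 * M 1 0 = 1 from (Matrix.det_fin_two M) ▸ hdet, map_one]
  refine ⟨M 0 0 + M 1 1, ?_⟩
  rw [map_add]
  linear_combination hCH - hdetK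

set_option maxHeartbeats 1600000 in
set_option synthInstance.maxHeartbeats 400000 in
/-- **Proposition (primitive divisors in the quadratic norm-one case).** Let `γ` be an
algebraic number of degree 2 over `ℚ` with `N_{ℚ(γ)/ℚ}(γ) = 1`, not a root of unity, and let
`K = ℚ(γ)`. If a prime `𝔭` of `K` is a primitive divisor of `u_n = γ^n − 1` and `p` is the
rational prime underlying `𝔭`, then `p ≡ 1 (mod n)` or `p ≡ −1 (mod n)`. -/
theorem primitive_divisor_quadratic (K : Type*) [Field K] [NumberField K]
    (hK : Module.finrank ℚ K = 2)
    (γ : K) (hγ0 : γ ≠ 0) (hgen : IntermediateField.adjoin ℚ {γ} = ⊤)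
    (hnorm : Algebra.norm ℚ γ = 1)
    (hroot : ∀ m : ℕ, 0 < m → γ ^ m ≠ 1)
    (n : ℕ) (hn : 0 < n) (v : HeightOneSpectrum (𝓞 K))
    (p : ℕ) (hp : p.Prime) (hpv : (p : 𝓞 K) ∈ v.asIdeal)
    (hprim : 1 ≤ nuP v (γ ^ n - 1) ∧ ∀ k : ℕ, 1 ≤ k → k < n → nuP v (γ ^ k - 1) = 0) :
    Int.ModEq (n : ℤ) (p : ℤ) 1 ∨ Int.ModEq (n : ℤ) (p : ℤ) (-1) := by
  classical
  haveI : Fact p.Prime := ⟨hp⟩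
  set R := 𝓞 K with hR
  set P := v.asIdeal with hPdef
  obtain ⟨hprim1, hprim2⟩ := hprim
  have hne : ∀ k : ℕ, 0 < k → γ ^ k - 1 ≠ 0 := fun k hk h =>
    hroot k hk (by rwa [sub_eq_zero] at h)
  have hvlt : v.valuation K (γ ^ n - 1) < 1 := nuP_lt_one v (hne n hn) hprim1
  have hveq : ∀ k : ℕ, 1 ≤ k → k < n → v.valuation K (γ ^ k - 1) = 1 := fun k h1 h2 =>
    nuP_eq_one v (hne k h1) (hprim2 k h1 h2)
  -- v(γ) = 1
  have hγv : v.valuation K γ = 1 := by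
    have hpow : v.valuation K (γ ^ n) = 1 := by
      have h1 : γ ^ n = (γ ^ n - 1) + 1 := by ring
      rw [h1, Valuation.map_add_eq_of_lt_right _ (by rwa [Valuation.map_one])]
      exact Valuation.map_one _
    rw [map_pow] at hpow
    have hv0 : v.valuation K γ ≠ 0 := (Valuation.ne_zero_iff _).mpr hγ0
    obtain ⟨w, hw⟩ : ∃ w : Multiplicative ℤ, v.valuation K γ = (w : WithZero (Multiplicative ℤ)) :=
      ⟨WithZero.unzero hv0, (WithZero.coe_unzero hv0).symm⟩
    rw [hw] at hpow ⊢
    rw [← WithZero.coe_pow, ← WithZero.coe_one, WithZero.coe_inj] at hpow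
    rw [← WithZero.coe_one, WithZero.coe_inj]
    have : n • Multiplicative.toAdd w = 0 := by
      rw [← toAdd_pow, hpow, toAdd_one]
    have hw0 : Multiplicative.toAdd w = 0 := by
      rcases smul_eq_zero.mp this with h | h
      · omega
      · exact h
    have := congrArg Multiplicative.ofAdd hw0
    rwa [ofAdd_toAdd, ofAdd_zero] at this
  -- quadratic relation
  obtain ⟨t, hquad⟩ := quadratic_relation hK γ hnorm
  -- valuation of t is at most one
  have htle : v.valuation K (algebraMap ℚ K t) ≤ 1 := by
    have h1 : v.valuation K (algebraMap ℚ K t * γ) ≤ 1 := by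
      rw [← hquad]
      refine le_trans (Valuation.map_add _ _ _) ?_
      rw [sup_le_iff, map_pow, hγv, Valuation.map_one]
      exact ⟨le_of_eq (one_pow 2), le_refl 1⟩
    rwa [Valuation.map_mul, hγv, mul_one] at h1
  -- integers in P
  haveI hPprime : P.IsPrime := v.isPrime
  have hint : ∀ m : ℤ, (m : R) ∈ P ↔ (p : ℤ) ∣ m := by
    intro m
    have hsub : Ideal.span {(p : ℤ)} ≤ Ideal.comap (algebraMap ℤ R) P := by
      rw [Ideal.span_singleton_le_iff_mem, Ideal.mem_comap]
      simpa using hpv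
    have hmax : (Ideal.span {(p : ℤ)}).IsMaximal := by
      have hprime' : Prime (p : ℤ) := Nat.prime_iff_prime_int.mp hp
      have hpr : (Ideal.span {(p : ℤ)}).IsPrime :=
        (Ideal.span_singleton_prime hprime'.ne_zero).mpr hprime'
      exact Ideal.IsPrime.isMaximal hpr (by
        rw [Ne, Ideal.span_singleton_eq_bot]
        exact_mod_cast hp.ne_zero)
    have hCne : Ideal.comap (algebraMap ℤ R) P ≠ ⊤ := by
      intro htop
      have h1 : (1 : ℤ) ∈ Ideal.comap (algebraMap ℤ R) P := htop ▸ Submodule.mem_top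
      rw [Ideal.mem_comap] at h1
      simp only [map_one] at h1
      exact v.isPrime.ne_top ((Ideal.eq_top_iff_one P).mpr h1)
    have hC : Ideal.comap (algebraMap ℤ R) P = Ideal.span {(p : ℤ)} :=
      (hmax.eq_of_le hCne hsub).symm
    constructor
    · intro hm
      have h2 : m ∈ Ideal.comap (algebraMap ℤ R) P := by
        rw [Ideal.mem_comap]
        simpa using hm
      rwa [hC, Ideal.mem_span_singleton] at h2
    · intro hm
      have h2 : m ∈ Ideal.span {(p : ℤ)} := Ideal.mem_span_singleton.mpr hm
      rw [← hC, Ideal.mem_comap] at h2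
      simpa using h2
  -- denominator of t is not in P
  have hden : ((t.den : ℤ) : R) ∉ P := by
    intro hmem
    have hpden : p ∣ t.den := Int.natCast_dvd_natCast.mp ((hint _).mp hmem)
    have hnum : ((t.num : ℤ) : R) ∉ P := by
      intro hmem2
      have hpnum : (p : ℤ) ∣ t.num := (hint _).mp hmem2
      have h1 : p ∣ t.num.natAbs := by
        have h2 := Int.natAbs_dvd_natAbs.mpr hpnum
        simpa using h2
      have h3 := Nat.dvd_gcd h1 hpden
      rw [t.reduced] at h3
      exact Nat.Prime.one_lt hp |>.ne' (Nat.dvd_one.mp h3)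
    have hnumval : v.valuation K ((t.num : K)) = 1 := by
      rw [← map_intCast (algebraMap R K) t.num, v.valuation_of_algebraMap]
      exact (my_intValuation_eq_one_iff v _).mpr hnum
    have hdenval : v.valuation K (((t.den : ℤ) : K)) < 1 := by
      rw [← map_intCast (algebraMap R K) (t.den : ℤ)]
      exact (my_valuation_lt_one_iff v _).mpr hmem
    have hnd : ((t.num : ℚ)) = t * ((t.den : ℚ)) := by
      have hd : ((t.den : ℚ)) ≠ 0 := by exact_mod_cast t.den_nz
      field_simp
      exact (Rat.mul_den_eq_num t).symm
    have hmul : v.valuation K ((t.num : K)) =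
        v.valuation K (algebraMap ℚ K t) * v.valuation K (((t.den : ℤ) : K)) := by
      rw [← Valuation.map_mul]
      congr 1
      have h5 := congrArg (algebraMap ℚ K) hnd
      rw [map_mul] at h5
      rw [eq_ratCast (algebraMap ℚ K) ((t.num : ℚ)), eq_ratCast (algebraMap ℚ K) ((t.den : ℚ))] at h5
      push_cast at h5
      exact_mod_cast h5
    have hlt : v.valuation K (algebraMap ℚ K t) * v.valuation K (((t.den : ℤ) : K)) < 1 := by
      calc v.valuation K (algebraMap ℚ K t) * v.valuation K (((t.den : ℤ) : K))
          ≤ 1 * v.valuation K (((t.den : ℤ) : K)) := mul_le_mul_left htle _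
        _ = v.valuation K (((t.den : ℤ) : K)) := one_mul _
        _ < 1 := hdenval
    rw [hmul] at hnumval
    rw [hnumval] at hlt
    exact lt_irrefl _ hlt
  -- numerator identity in K
  have hndK : ((t.num : ℤ) : K) = algebraMap ℚ K t * ((t.den : ℤ) : K) := by
    have hd : ((t.den : ℚ)) ≠ 0 := by exact_mod_cast t.den_nz
    have hnd : ((t.num : ℚ)) = t * ((t.den : ℚ)) := by field_simp; exact (Rat.mul_den_eq_num t).symm
    have h5 := congrArg (algebraMap ℚ K) hnd
    rw [map_mul] at h5
    rw [eq_ratCast (algebraMap ℚ K) ((t.num : ℚ)), eq_ratCast (algebraMap ℚ K) ((t.den : ℚ))] at h5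
    push_cast at h5
    exact_mod_cast h5
  -- representation of γ
  obtain ⟨a, s, haP, hsP, hrep⟩ := exists_rep v γ hγ0 hγv
  have hS0 : algebraMap R K s ≠ 0 := by
    rw [Ne, IsFractionRing.to_map_eq_zero_iff]
    intro h
    rw [h] at hsP
    exact hsP (Submodule.zero_mem P)
  have hγAS : γ = algebraMap R K a / algebraMap R K s := by
    rw [eq_div_iff hS0]; exact hrep
  -- the residue field
  haveI hPmax : P.IsMaximal := Ideal.IsPrime.isMaximal v.isPrime v.ne_bot
  letI : Field (R ⧸ P) := Ideal.Quotient.field P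
  haveI hcharF : CharP (R ⧸ P) p := by
    constructor
    intro m
    rw [show ((m : R ⧸ P)) = Ideal.Quotient.mk P ((m : R)) from
      (map_natCast (Ideal.Quotient.mk P) m).symm]
    rw [Ideal.Quotient.eq_zero_iff_mem]
    rw [show ((m : R)) = (((m : ℤ)) : R) by push_cast; rfl]
    rw [hint (m : ℤ)]
    exact Int.natCast_dvd_natCast
  set π : R →+* R ⧸ P := Ideal.Quotient.mk P with hπ
  set gA : R ⧸ P := π a with hgAdef
  set gS : R ⧸ P := π s with hgSdef
  have hgS : gS ≠ 0 := by
    rw [hgSdef, hπ, Ne, Ideal.Quotient.eq_zero_iff_mem]; exact hsP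
  have hgA : gA ≠ 0 := by
    rw [hgAdef, hπ, Ne, Ideal.Quotient.eq_zero_iff_mem]; exact haP
  set g : R ⧸ P := gA / gS with hgdef
  have hg0 : g ≠ 0 := div_ne_zero hgA hgS
  -- quadratic relation in R
  have hrelK : algebraMap R K (((t.den : ℤ) : R) * a ^ 2 + ((t.den : ℤ) : R) * s ^ 2)
      = algebraMap R K (((t.num : ℤ) : R) * a * s) := by
    rw [map_add, map_mul, map_mul, map_mul, map_mul, map_pow, map_pow, map_intCast, map_intCast]
    linear_combination ((t.den : ℤ) : K) * (algebraMap R K s) ^ 2 * hquad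
      + (((t.num : ℤ) : K) * (algebraMap R K s)
        - ((t.den : ℤ) : K) * (algebraMap R K a + γ * algebraMap R K s)) * hrep
      - γ * (algebraMap R K s) ^ 2 * hndK
  have hrel : ((t.den : ℤ) : R) * a ^ 2 + ((t.den : ℤ) : R) * s ^ 2
      = ((t.num : ℤ) : R) * a * s := IsFractionRing.injective R K hrelK
  -- quadratic relation in the residue field
  have hdF : (((t.den : ℤ)) : R ⧸ P) ≠ 0 := by
    rw [show (((t.den : ℤ)) : R ⧸ P) = π (((t.den : ℤ)) : R) from (map_intCast π _).symm,
      Ne, Ideal.Quotient.eq_zero_iff_mem]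
    exact hden
  have hgrel : (((t.den : ℤ)) : R ⧸ P) * gA ^ 2 + (((t.den : ℤ)) : R ⧸ P) * gS ^ 2
      = (((t.num : ℤ)) : R ⧸ P) * gA * gS := by
    have h6 := congrArg π hrel
    simpa only [map_add, map_mul, map_pow, map_intCast] using h6
  set τ : R ⧸ P := (((t.num : ℤ)) : R ⧸ P) / (((t.den : ℤ)) : R ⧸ P) with hτdef
  have hgquad : g ^ 2 + 1 = τ * g := by
    rw [hgdef, hτdef]
    rw [div_pow, div_mul_div_comm, div_add' _ _ _ (pow_ne_zero 2 hgS),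
      div_eq_div_iff (pow_ne_zero 2 hgS) (mul_ne_zero hdF hgS)]
    linear_combination gS * hgrel
  -- order of g is n
  have hkey : ∀ k : ℕ, 0 < k → (g ^ k = 1 ↔ v.valuation K (γ ^ k - 1) < 1) := by
    intro k hk
    have hsval : v.valuation K (algebraMap R K s) = 1 := by
      rw [v.valuation_of_algebraMap]
      exact (my_intValuation_eq_one_iff v s).mpr hsP
    have hγk : γ ^ k - 1 = algebraMap R K (a ^ k - s ^ k) / (algebraMap R K s) ^ k := by
      rw [map_sub, map_pow, map_pow, hγAS]
      field_simp
      rw [sub_mul, div_pow, div_mul_cancel₀ _ (pow_ne_zero k hS0), one_mul]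
    have hval : v.valuation K (γ ^ k - 1) = v.valuation K (algebraMap R K (a ^ k - s ^ k)) := by
      rw [hγk, map_div₀, map_pow, hsval, one_pow, div_one]
    rw [hval, my_valuation_lt_one_iff]
    have hgk : g ^ k = gA ^ k / gS ^ k := by rw [hgdef, div_pow]
    constructor
    · intro h1
      have h2 : gA ^ k = gS ^ k := by
        rw [hgk, div_eq_one_iff_eq (pow_ne_zero k hgS)] at h1
        exact h1
      have h3 : π (a ^ k - s ^ k) = 0 := by
        rw [map_sub, map_pow, map_pow, ← hgAdef, ← hgSdef, h2, sub_self]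
      rwa [hπ, Ideal.Quotient.eq_zero_iff_mem] at h3
    · intro h1
      have h3 : π (a ^ k - s ^ k) = 0 := by
        rw [hπ, Ideal.Quotient.eq_zero_iff_mem]; exact h1
      rw [map_sub, map_pow, map_pow, ← hgAdef, ← hgSdef, sub_eq_zero] at h3
      rw [hgk, h3, div_self (pow_ne_zero k hgS)]
  have hgn : g ^ n = 1 := (hkey n hn).mpr hvlt
  have hglt : ∀ m : ℕ, m < n → 0 < m → g ^ m ≠ 1 := by
    intro m h1 h2 hgm
    have h3 := (hkey m h2).mp hgm
    rw [hveq m h2 h1] at h3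
    exact lt_irrefl _ h3
  have hord : orderOf g = n := (orderOf_eq_iff hn).mpr ⟨hgn, hglt⟩
  -- Frobenius
  have hZfrob : ∀ m : ℤ, ((m : R ⧸ P)) ^ p = (m : R ⧸ P) := by
    intro m
    have h1 : ((ZMod.castHom dvd_rfl (R ⧸ P)) ((m : ZMod p))) = (m : R ⧸ P) :=
      map_intCast _ m
    rw [← h1, ← map_pow, ZMod.pow_card]
  have hτp : τ ^ p = τ := by
    rw [hτdef, div_pow, hZfrob, hZfrob]
  have hfrob : (g ^ p) ^ 2 + 1 = τ * g ^ p := by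
    have h1 := congrArg (fun z : R ⧸ P => z ^ p) hgquad
    rw [add_pow_char, one_pow, mul_pow, hτp, ← pow_mul, mul_comm 2 p, pow_mul] at h1
    exact h1
  have hsplit : (g ^ p - g) * (g ^ p * g - 1) = 0 := by
    linear_combination g * hfrob - g ^ p * hgquad
  rcases mul_eq_zero.mp hsplit with h | h
  · left
    have hgp : g ^ p = g := by rwa [sub_eq_zero] at h
    have hg1 : g ^ (p - 1) = 1 := by
      have h2 : g ^ (p - 1) * g = 1 * g := by
        rw [← pow_succ, Nat.sub_add_cancel hp.one_lt.le, hgp, one_mul]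
      exact mul_right_cancel₀ hg0 h2
    have hdvd : n ∣ p - 1 := hord ▸ orderOf_dvd_of_pow_eq_one hg1
    have hdvdZ : (n : ℤ) ∣ (p : ℤ) - 1 := by
      have h4 := Int.natCast_dvd_natCast.mpr hdvd
      rwa [Nat.cast_sub hp.one_lt.le, Nat.cast_one] at h4
    refine Int.ModEq.symm (Int.modEq_iff_dvd.mpr ?_)
    simpa using hdvdZ
  · right
    have hgp : g ^ (p + 1) = 1 := by
      rw [pow_succ]; rwa [sub_eq_zero] at h
    have hdvd : n ∣ p + 1 := hord ▸ orderOf_dvd_of_pow_eq_one hgp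
    have hdvdZ : (n : ℤ) ∣ (p : ℤ) + 1 := by exact_mod_cast Int.natCast_dvd_natCast.mpr hdvd
    refine Int.ModEq.symm (Int.modEq_iff_dvd.mpr ?_)
    rw [show (p : ℤ) - (-1) = (p : ℤ) + 1 by ring]
    exact hdvdZ
end
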